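/- Let G₁ and G₂ be finite connected simple graphs with k₁ and k₂ peripheral vertices respectively. Then PWW(G₁ □ G₂) = k₂²·PWW(G₁) + k₁²·PWW(G₂) + 2·PW(G₁)·PW(G₂). -/

import Mathlib

open Finset SimpleGraph

noncomputable section

/-- Eccentricity of a vertex: maximum distance to any vertex. -/
def ecc {V : Type*} [Fintype V] (G : SimpleGraph V) (u : V) : ℕ :=
  Finset.univ.sup (G.dist u)

/-- Diameter: maximum eccentricity. -/
def gdiam {V : Type*} [Fintype V] (G : SimpleGraph V) : ℕ :=
  Finset.univ.sup (ecc G)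

/-- The set of peripheral vertices: vertices of maximum eccentricity. -/
def peri {V : Type*} [Fintype V] [DecidableEq V] (G : SimpleGraph V) : Finset V :=
  Finset.univ.filter (fun u => ecc G u = gdiam G)

/-- Wiener index: sum of distances over unordered pairs of distinct vertices. -/
def wiener {V : Type*} [Fintype V] [DecidableEq V] (G : SimpleGraph V) : ℚ :=
  (1/2) * ∑ p ∈ (Finset.univ : Finset V).offDiag, (G.dist p.1 p.2 : ℚ)

/-- Hyper-Wiener index. -/
def hyperWiener {V : Type*} [Fintype V] [DecidableEq V] (G : SimpleGraph V) : ℚ :=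
  (1/4) * ∑ p ∈ (Finset.univ : Finset V).offDiag,
    ((G.dist p.1 p.2 : ℚ) + (G.dist p.1 p.2 : ℚ) ^ 2)

/-- Peripheral Wiener index. -/
def periWiener {V : Type*} [Fintype V] [DecidableEq V] (G : SimpleGraph V) : ℚ :=
  (1/2) * ∑ p ∈ (peri G).offDiag, (G.dist p.1 p.2 : ℚ)

/-- Peripheral hyper-Wiener index. -/
def periHyperWiener {V : Type*} [Fintype V] [DecidableEq V] (G : SimpleGraph V) : ℚ :=
  (1/4) * ∑ p ∈ (peri G).offDiag,
    ((G.dist p.1 p.2 : ℚ) + (G.dist p.1 p.2 : ℚ) ^ 2)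

end


section Aux

open Finset SimpleGraph

private lemma walk_len_lb {α β : Type*} {G : SimpleGraph α} {H : SimpleGraph β}
    (hG : G.Connected) (hH : H.Connected) {x y : α × β} (w : (G.boxProd H).Walk x y) :
    G.dist x.1 y.1 + H.dist x.2 y.2 ≤ w.length := by
  induction w with
  | nil => simp
  | @cons x m y h w ih =>
    rw [SimpleGraph.Walk.length_cons]
    rcases h with ⟨h1, h2⟩ | ⟨h1, h2⟩
    · have t1 : G.dist x.1 y.1 ≤ 1 + G.dist m.1 y.1 := by
        calc G.dist x.1 y.1 ≤ G.dist x.1 m.1 + G.dist m.1 y.1 := hG.dist_triangle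
        _ ≤ 1 + G.dist m.1 y.1 := by
            gcongr; exact le_of_eq (dist_eq_one_iff_adj.mpr h1)
      have t2 : H.dist x.2 y.2 = H.dist m.2 y.2 := by rw [h2]
      omega
    · have t1 : H.dist x.2 y.2 ≤ 1 + H.dist m.2 y.2 := by
        calc H.dist x.2 y.2 ≤ H.dist x.2 m.2 + H.dist m.2 y.2 := hH.dist_triangle
        _ ≤ 1 + H.dist m.2 y.2 := by
            gcongr; exact le_of_eq (dist_eq_one_iff_adj.mpr h1)
      have t2 : G.dist x.1 y.1 = G.dist m.1 y.1 := by rw [h2]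
      omega

private lemma boxProd_dist' {α β : Type*} {G : SimpleGraph α} {H : SimpleGraph β}
    (hG : G.Connected) (hH : H.Connected) (x y : α × β) :
    (G.boxProd H).dist x y = G.dist x.1 y.1 + H.dist x.2 y.2 := by
  refine le_antisymm ?_ ?_
  · obtain ⟨w₁, hw₁⟩ := hG.exists_walk_length_eq_dist x.1 y.1
    obtain ⟨w₂, hw₂⟩ := hH.exists_walk_length_eq_dist x.2 y.2
    have := SimpleGraph.dist_le
      (((w₁.boxProdLeft H x.2).append (w₂.boxProdRight G y.1)) :
        (G.boxProd H).Walk (x.1, x.2) (y.1, y.2))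
    have l1 : (w₁.boxProdLeft H x.2).length = w₁.length := SimpleGraph.Walk.length_map _ _
    have l2 : (w₂.boxProdRight G y.1).length = w₂.length := SimpleGraph.Walk.length_map _ _
    rw [SimpleGraph.Walk.length_append, l1, l2] at this
    simpa [SimpleGraph.Walk.length_append, SimpleGraph.Walk.boxProdLeft,
      SimpleGraph.Walk.boxProdRight, SimpleGraph.Walk.length_map, hw₁, hw₂] using this
  · obtain ⟨w, hw⟩ := (hG.boxProd hH).exists_walk_length_eq_dist x y
    rw [← hw]
    exact walk_len_lb hG hH w

private lemma sup_add_prod {α β : Type*} [Fintype α] [Fintype β] [Nonempty α] [Nonempty β]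
    (f : α → ℕ) (g : β → ℕ) :
    (Finset.univ : Finset (α × β)).sup (fun p => f p.1 + g p.2) =
      Finset.univ.sup f + Finset.univ.sup g := by
  apply le_antisymm
  · exact Finset.sup_le fun p _ =>
      add_le_add (Finset.le_sup (mem_univ _)) (Finset.le_sup (mem_univ _))
  · obtain ⟨a, -, ha⟩ := Finset.exists_mem_eq_sup (univ : Finset α) univ_nonempty f
    obtain ⟨b, -, hb⟩ := Finset.exists_mem_eq_sup (univ : Finset β) univ_nonempty g
    rw [ha, hb]
    exact Finset.le_sup (f := fun p : α × β => f p.1 + g p.2) (mem_univ (a, b))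

private lemma ecc_boxProd {α β : Type*} [Fintype α] [Fintype β]
    {G : SimpleGraph α} {H : SimpleGraph β}
    (hG : G.Connected) (hH : H.Connected) (x : α × β) :
    ecc (G.boxProd H) x = ecc G x.1 + ecc H x.2 := by
  have : Nonempty α := hG.nonempty
  have : Nonempty β := hH.nonempty
  have h : (G.boxProd H).dist x = fun p : α × β => G.dist x.1 p.1 + H.dist x.2 p.2 := by
    funext p; exact boxProd_dist' hG hH x p
  rw [ecc, h, sup_add_prod]; rfl

private lemma gdiam_boxProd {α β : Type*} [Fintype α] [Fintype β]
    {G : SimpleGraph α} {H : SimpleGraph β}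
    (hG : G.Connected) (hH : H.Connected) :
    gdiam (G.boxProd H) = gdiam G + gdiam H := by
  have : Nonempty α := hG.nonempty
  have : Nonempty β := hH.nonempty
  have h : ecc (G.boxProd H) = fun p : α × β => ecc G p.1 + ecc H p.2 := by
    funext p; exact ecc_boxProd hG hH p
  rw [gdiam, h, sup_add_prod]; rfl

private lemma peri_boxProd {α β : Type*} [Fintype α] [Fintype β] [DecidableEq α] [DecidableEq β]
    {G : SimpleGraph α} {H : SimpleGraph β}
    (hG : G.Connected) (hH : H.Connected) :
    peri (G.boxProd H) = peri G ×ˢ peri H := by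
  ext ⟨a, b⟩
  have h1 : ecc G a ≤ gdiam G := Finset.le_sup (mem_univ a)
  have h2 : ecc H b ≤ gdiam H := Finset.le_sup (mem_univ b)
  simp only [peri, mem_filter, mem_univ, true_and, Finset.mem_product,
    ecc_boxProd hG hH, gdiam_boxProd hG hH]
  omega

private lemma sum_offDiag_eq {ι : Type*} [DecidableEq ι] (s : Finset ι) (f : ι → ι → ℚ)
    (h : ∀ a, f a a = 0) :
    ∑ p ∈ s.offDiag, f p.1 p.2 = ∑ a ∈ s, ∑ b ∈ s, f a b := by
  rw [← Finset.sum_product', ← Finset.diag_union_offDiag,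
    Finset.sum_union (Finset.disjoint_diag_offDiag s)]
  have : ∑ p ∈ s.diag, f p.1 p.2 = 0 := by
    rw [Finset.sum_diag]; exact Finset.sum_eq_zero fun a _ => h a
  rw [this, zero_add]

private lemma quad_sum {ι κ : Type*} (S : Finset ι) (T : Finset κ)
    (f1 g1 : ι → ι → ℚ) (f2 g2 : κ → κ → ℚ) :
    ∑ a ∈ S, ∑ b ∈ T, ∑ c ∈ S, ∑ d ∈ T, (f1 a c + f2 b d + 2 * (g1 a c * g2 b d))
    = (T.card : ℚ) ^ 2 * (∑ a ∈ S, ∑ c ∈ S, f1 a c)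
      + (S.card : ℚ) ^ 2 * (∑ b ∈ T, ∑ d ∈ T, f2 b d)
      + 2 * (∑ a ∈ S, ∑ c ∈ S, g1 a c) * (∑ b ∈ T, ∑ d ∈ T, g2 b d) := by
  have hg : ∑ a ∈ S, ∑ b ∈ T, ∑ c ∈ S, g1 a c * ∑ d ∈ T, g2 b d
      = (∑ a ∈ S, ∑ c ∈ S, g1 a c) * (∑ b ∈ T, ∑ d ∈ T, g2 b d) := by
    simp only [← Finset.sum_mul, ← Finset.mul_sum]
  simp only [Finset.sum_add_distrib, ← Finset.mul_sum, Finset.sum_const, nsmul_eq_mul]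
  rw [hg]
  ring

end Aux

theorem pww_boxProd {V W : Type*} [Fintype V] [Fintype W] [DecidableEq V] [DecidableEq W]
    (G : SimpleGraph V) (H : SimpleGraph W) (hG : G.Connected) (hH : H.Connected)
    (k₁ k₂ : ℕ) (hk₁ : k₁ = (peri G).card) (hk₂ : k₂ = (peri H).card) :
    periHyperWiener (G.boxProd H) =
      (k₂ : ℚ) ^ 2 * periHyperWiener G + (k₁ : ℚ) ^ 2 * periHyperWiener H +
        2 * periWiener G * periWiener H := by
  classical
  subst hk₁ hk₂
  have e0 : ∑ p ∈ (peri (G.boxProd H)).offDiag,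
      (((G.boxProd H).dist p.1 p.2 : ℚ) + ((G.boxProd H).dist p.1 p.2 : ℚ) ^ 2)
      = ∑ a ∈ peri G ×ˢ peri H, ∑ b ∈ peri G ×ˢ peri H,
          (((G.boxProd H).dist a b : ℚ) + ((G.boxProd H).dist a b : ℚ) ^ 2) := by
    rw [peri_boxProd hG hH]
    exact sum_offDiag_eq _
      (fun x y => ((G.boxProd H).dist x y : ℚ) + ((G.boxProd H).dist x y : ℚ) ^ 2)
      (fun a => by simp [SimpleGraph.dist_self])
  have e1 : ∑ p ∈ (peri G).offDiag, ((G.dist p.1 p.2 : ℚ) + (G.dist p.1 p.2 : ℚ) ^ 2)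
      = ∑ a ∈ peri G, ∑ c ∈ peri G, ((G.dist a c : ℚ) + (G.dist a c : ℚ) ^ 2) :=
    sum_offDiag_eq _ (fun x y => (G.dist x y : ℚ) + (G.dist x y : ℚ) ^ 2) (fun a => by simp [SimpleGraph.dist_self])
  have e2 : ∑ p ∈ (peri H).offDiag, ((H.dist p.1 p.2 : ℚ) + (H.dist p.1 p.2 : ℚ) ^ 2)
      = ∑ b ∈ peri H, ∑ d ∈ peri H, ((H.dist b d : ℚ) + (H.dist b d : ℚ) ^ 2) :=
    sum_offDiag_eq _ (fun x y => (H.dist x y : ℚ) + (H.dist x y : ℚ) ^ 2) (fun a => by simp [SimpleGraph.dist_self])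
  have e3 : ∑ p ∈ (peri G).offDiag, (G.dist p.1 p.2 : ℚ)
      = ∑ a ∈ peri G, ∑ c ∈ peri G, (G.dist a c : ℚ) :=
    sum_offDiag_eq _ (fun x y => (G.dist x y : ℚ)) (fun a => by simp [SimpleGraph.dist_self])
  have e4 : ∑ p ∈ (peri H).offDiag, (H.dist p.1 p.2 : ℚ)
      = ∑ b ∈ peri H, ∑ d ∈ peri H, (H.dist b d : ℚ) :=
    sum_offDiag_eq _ (fun x y => (H.dist x y : ℚ)) (fun a => by simp [SimpleGraph.dist_self])
  have key : ∀ x y : ℚ, (x + y) + (x + y) ^ 2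
      = (x + x ^ 2) + (y + y ^ 2) + 2 * (x * y) := fun x y => by ring
  unfold periHyperWiener periWiener
  rw [e0, e1, e2, e3, e4]
  simp only [Finset.sum_product, boxProd_dist' hG hH, Nat.cast_add, key]
  rw [quad_sum]
  ring
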